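/- Let Λ ⊆ Γ be Artin algebras over the same commutative Artinian base ring, where Λ is a subring of Γ containing the identity of Γ, and assume the Jacobson radicals coincide: J_Λ = J_Γ (as subsets of Γ; in particular J_Γ ⊆ Λ). Then for every finitely generated left Γ-module Y, the natural Γ-linear map δ : Y → Hom_Λ(Γ, Y), defined by δ(y)(γ) = γ·y, is a split monomorphism of Γ-modules; here Hom_Λ(Γ, Y) denotes the coinduced module of Λ-linear maps from Γ (with its left Λ-module structure by left multiplication) to Y, with left Γ-action (γ₀·f)(γ) := f(γ·γ₀). -/

import Mathlib

universe u

/-- The Jacobson radical of a ring: the intersection of its maximal left ideals. -/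
def jacobsonRadical (R : Type u) [Ring R] : Ideal R :=
  sInf {I : Ideal R | I.IsMaximal}

variable {Λ Γ : Type u} [Ring Λ] [Ring Γ]

/-- The coinduced module `Hom_Λ(Γ, Y)` along a ring homomorphism `φ : Λ →+* Γ`: additive maps
`Γ → Y` that are `Λ`-linear for the `Λ`-module structures obtained by restriction of scalars
along `φ`. -/
def coindCarrier (φ : Λ →+* Γ) (Y : Type u) [AddCommGroup Y] [Module Γ Y] :
    AddSubgroup (Γ →+ Y) where
  carrier := {f | ∀ (l : Λ) (g : Γ), f (φ l * g) = φ l • f g}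
  add_mem' := by
    intro f g hf hg l x
    simp [hf l x, hg l x, smul_add]
  zero_mem' := by intro l x; simp
  neg_mem' := by
    intro f hf l x
    simp [hf l x]

/-- The natural map `δ : Y → Hom_Λ(Γ, Y)`, `δ(y)(γ) = γ • y`. -/
def coindDelta (φ : Λ →+* Γ) (Y : Type u) [AddCommGroup Y] [Module Γ Y] (y : Y) :
    ↥(coindCarrier φ Y) :=
  ⟨{ toFun := fun g => g • y
     map_zero' := zero_smul Γ y
     map_add' := fun a b => add_smul a b y },
   fun l g => mul_smul (φ l) g y⟩

/-- The left `Γ`-action on `Hom_Λ(Γ, Y)` given by `(γ₀ • f) (γ) = f (γ * γ₀)`. -/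
def coindSMul (φ : Λ →+* Γ) (Y : Type u) [AddCommGroup Y] [Module Γ Y] (γ₀ : Γ)
    (f : ↥(coindCarrier φ Y)) : ↥(coindCarrier φ Y) :=
  ⟨(f : Γ →+ Y).comp (AddMonoidHom.mulRight γ₀), by
    intro l g
    simpa [mul_assoc] using f.2 l (g * γ₀)⟩

lemma jacobsonRadical_eq (Γ : Type u) [Ring Γ] :
    jacobsonRadical Γ = (⊥ : Ideal Γ).jacobson := by
  unfold jacobsonRadical Ideal.jacobson
  congr 1
  ext I
  simp

lemma mul_mem_jacobsonRadical {Γ : Type u} [Ring Γ] {x y : Γ}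
    (hx : x ∈ jacobsonRadical Γ) : x * y ∈ jacobsonRadical Γ := by
  rw [jacobsonRadical_eq] at hx ⊢
  exact Ideal.mul_mem_right _ _ hx

lemma quot_jacobson_isSemisimple (Γ : Type u) [Ring Γ] [IsArtinianRing Γ] :
    IsSemisimpleModule Γ (Γ ⧸ (jacobsonRadical Γ)) := by
  classical
  obtain ⟨M₀, hM₀mem, hM₀min⟩ := IsArtinian.set_has_minimal
    {I : Submodule Γ Γ | ∃ t : Finset (Ideal Γ), (∀ J ∈ t, J.IsMaximal) ∧ I = t.inf id}
    ⟨⊤, ∅, by simp, by simp⟩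
  obtain ⟨t, htmax, rfl⟩ := hM₀mem
  have hJ : jacobsonRadical Γ = t.inf id := by
    apply le_antisymm
    · exact Finset.le_inf fun J hJ => sInf_le (htmax J hJ)
    · refine le_sInf fun I hI => ?_
      have hmem : (insert I t).inf id ∈
          {I : Submodule Γ Γ | ∃ t : Finset (Ideal Γ), (∀ J ∈ t, J.IsMaximal) ∧ I = t.inf id} :=
        ⟨insert I t, fun J hJ' => by
          rcases Finset.mem_insert.mp hJ' with h | h
          · exact h ▸ hI
          · exact htmax J h, rfl⟩
      have hle : (insert I t).inf id ≤ t.inf id :=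
        Finset.inf_mono (Finset.subset_insert _ _)
      have heq : (insert I t).inf id = t.inf id :=
        (hle.lt_or_eq).resolve_left (hM₀min _ hmem)
      calc t.inf id = (insert I t).inf id := heq.symm
        _ ≤ id I := Finset.inf_le (Finset.mem_insert_self _ _)
  -- pi of simple quotients is semisimple
  have hsimple : ∀ J : t, IsSimpleModule Γ (Γ ⧸ (J : Ideal Γ)) := fun J =>
    isSimpleModule_iff_isCoatom.mpr (Ideal.isMaximal_def.mp (htmax J J.2))
  haveI hpi : IsSemisimpleModule Γ (∀ J : t, Γ ⧸ (J : Ideal Γ)) := by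
    refine isSemisimpleModule_of_isSemisimpleModule_submodule'
      (p := fun i => LinearMap.range (LinearMap.single Γ _ i)) (fun i => ?_) ?_
    · haveI := hsimple i
      exact IsSemisimpleModule.range _
    · simp_rw [LinearMap.range_eq_map, Submodule.iSup_map_single, Submodule.pi_top]
  -- embed Γ ⧸ J into the pi
  let f : Γ →ₗ[Γ] (∀ J : t, Γ ⧸ (J : Ideal Γ)) := LinearMap.pi fun J => (J : Ideal Γ).mkQ
  have hker : LinearMap.ker f = t.inf id := by
    rw [LinearMap.ker_pi]
    simp only [Submodule.ker_mkQ]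
    exact le_antisymm (Finset.le_inf fun J hJ => iInf_le (fun i : t => (i : Ideal Γ)) ⟨J, hJ⟩)
      (le_iInf fun J => Finset.inf_le J.2)
  let g := (jacobsonRadical Γ).liftQ f (by rw [hJ, ← hker])
  have hginj : Function.Injective g :=
    LinearMap.ker_eq_bot.mp (Submodule.ker_liftQ_eq_bot _ _ _ (by rw [hker, ← hJ]))
  haveI : IsSemisimpleModule Γ ↥(LinearMap.range g) := inferInstance
  exact IsSemisimpleModule.congr (M := ↥(LinearMap.range g)) (LinearEquiv.ofInjective g hginj)

lemma semisimple_of_jacobson_smul_zero {Γ : Type u} [Ring Γ] [IsArtinianRing Γ]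
    (M : Type u) [AddCommGroup M] [Module Γ M]
    (h : ∀ j ∈ jacobsonRadical Γ, ∀ m : M, j • m = 0) : IsSemisimpleModule Γ M := by
  haveI := quot_jacobson_isSemisimple Γ
  refine isSemisimpleModule_of_isSemisimpleModule_submodule'
    (p := fun m : M => Submodule.span Γ {m}) (fun m => ?_) ?_
  · show IsSemisimpleModule Γ ↥(Submodule.span Γ {m})
    have hle : jacobsonRadical Γ ≤ LinearMap.ker (LinearMap.toSpanSingleton Γ M m) :=
      fun j hj => h j hj m
    have : Submodule.span Γ {m} = LinearMap.range ((jacobsonRadical Γ).liftQ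
        (LinearMap.toSpanSingleton Γ M m) hle) := by
      rw [Submodule.range_liftQ, ← LinearMap.span_singleton_eq_range]
    rw [this]
    exact IsSemisimpleModule.range _
  · rw [eq_top_iff]
    exact fun m _ => le_iSup (fun m : M => Submodule.span Γ {m}) m
      (Submodule.mem_span_singleton_self m)

-- the Γ-module structure on the coinduced module
def coindModule (φ : Λ →+* Γ) (Y : Type u) [AddCommGroup Y] [Module Γ Y] :
    Module Γ ↥(coindCarrier φ Y) where
  smul := coindSMul φ Y
  one_smul f := Subtype.ext (AddMonoidHom.ext fun g =>
    show (f : Γ →+ Y) (g * 1) = (f : Γ →+ Y) g by rw [mul_one])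
  mul_smul a b f := Subtype.ext (AddMonoidHom.ext fun g =>
    show (f : Γ →+ Y) (g * (a * b)) = (f : Γ →+ Y) (g * a * b) by rw [mul_assoc])
  smul_zero a := Subtype.ext (AddMonoidHom.ext fun g => rfl)
  smul_add a f h := Subtype.ext (AddMonoidHom.ext fun g => rfl)
  add_smul a b f := Subtype.ext (AddMonoidHom.ext fun g =>
    show (f : Γ →+ Y) (g * (a + b)) = (f : Γ →+ Y) (g * a) + (f : Γ →+ Y) (g * b) by
      rw [mul_add, map_add])
  zero_smul f := Subtype.ext (AddMonoidHom.ext fun g =>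
    show (f : Γ →+ Y) (g * 0) = 0 by rw [mul_zero, map_zero])


/-- Let `Λ ⊆ Γ` be Artin algebras over the same commutative Artinian base ring `R` (the
inclusion being the injective `R`-algebra homomorphism `φ`), with the same Jacobson radical.
Then for every finitely generated left `Γ`-module `Y` the natural map
`δ : Y → Hom_Λ(Γ, Y)` is a split monomorphism of `Γ`-modules: it admits an additive,
`Γ`-linear retraction. -/
theorem stmt_15 {R : Type u} [CommRing R] [IsArtinianRing R]
    {Λ Γ : Type u} [Ring Λ] [Ring Γ] [Algebra R Λ] [Algebra R Γ]
    [Module.Finite R Λ] [Module.Finite R Γ]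
    (φ : Λ →ₐ[R] Γ) (hinj : Function.Injective φ)
    (hJ : (jacobsonRadical Γ : Set Γ) = ⇑φ '' (jacobsonRadical Λ : Set Λ))
    (Y : Type u) [AddCommGroup Y] [Module Γ Y] [Module.Finite Γ Y] :
    ∃ ρ : ↥(coindCarrier φ.toRingHom Y) →+ Y,
      (∀ (γ : Γ) (f : ↥(coindCarrier φ.toRingHom Y)),
          ρ (coindSMul φ.toRingHom Y γ f) = γ • ρ f) ∧
      ∀ y : Y, ρ (coindDelta φ.toRingHom Y y) = y := by
  classical
  haveI : IsArtinianRing Γ := IsArtinianRing.of_finite R Γ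
  letI : Module Γ ↥(coindCarrier φ.toRingHom Y) := coindModule φ.toRingHom Y
  set H := ↥(coindCarrier φ.toRingHom Y) with hH
  -- the natural map δ as a Γ-linear map
  let δₗ : Y →ₗ[Γ] H :=
    { toFun := coindDelta φ.toRingHom Y
      map_add' := fun y z => Subtype.ext (AddMonoidHom.ext fun g => smul_add g y z)
      map_smul' := fun γ y => Subtype.ext (AddMonoidHom.ext fun g =>
        show g • (γ • y) = (g * γ) • y from (mul_smul g γ y).symm) }
  have hδ1 : ∀ y : Y, (δₗ y : Γ →+ Y) 1 = y := fun y => one_smul Γ y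
  have hδinj : Function.Injective δₗ := by
    intro y z h
    have := congrArg (fun f : H => (f : Γ →+ Y) 1) h
    simpa [hδ1] using this
  -- key identity : j • f = δₗ (j • f 1) for j in the radical
  have key : ∀ j ∈ jacobsonRadical Γ, ∀ f : H,
      j • f = δₗ (j • (f : Γ →+ Y) 1) := by
    intro j hj f
    apply Subtype.ext; apply AddMonoidHom.ext; intro γ
    show (f : Γ →+ Y) (γ * j) = γ • (j • (f : Γ →+ Y) 1)
    have hγj : γ * j ∈ jacobsonRadical Γ := by
      simpa [smul_eq_mul] using (jacobsonRadical Γ).smul_mem γ hj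
    have : γ * j ∈ ⇑φ '' (jacobsonRadical Λ : Set Λ) := hJ ▸ hγj
    obtain ⟨l, _, hφl⟩ := this
    have h1 : (f : Γ →+ Y) (φ.toRingHom l * 1) = φ.toRingHom l • (f : Γ →+ Y) 1 := f.2 l 1
    rw [mul_one] at h1
    have hφl' : φ.toRingHom l = γ * j := hφl
    rw [← hφl', h1, hφl', mul_smul]
  -- the submodule killed by the radical
  let S : Submodule Γ H :=
    { carrier := {f : H | ∀ j ∈ jacobsonRadical Γ, j • f = 0}
      add_mem' := fun {f g} hf hg j hj => by rw [smul_add, hf j hj, hg j hj, add_zero]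
      zero_mem' := fun j hj => smul_zero j
      smul_mem' := fun γ f hf j hj => by
        rw [← mul_smul]
        exact hf (j * γ) (mul_mem_jacobsonRadical hj) }
  have hsum : LinearMap.range δₗ ⊔ S = ⊤ := by
    rw [eq_top_iff]
    intro f _
    have h2 : f - δₗ ((f : Γ →+ Y) 1) ∈ S := by
      intro j hj
      rw [smul_sub, key j hj f, ← LinearMap.map_smul δₗ j, sub_self]
    have : f = δₗ ((f : Γ →+ Y) 1) + (f - δₗ ((f : Γ →+ Y) 1)) := by abel
    rw [this]
    exact Submodule.add_mem_sup (LinearMap.mem_range_self _ _) h2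
  -- S is a semisimple Γ-module
  haveI : IsSemisimpleModule Γ ↥S := by
    refine semisimple_of_jacobson_smul_zero ↥S (fun j hj s => ?_)
    exact Subtype.ext (by rw [Submodule.coe_smul, s.2 j hj, ZeroMemClass.coe_zero])
  -- a complement
  obtain ⟨T', hT'⟩ := exists_isCompl (Submodule.comap S.subtype (LinearMap.range δₗ))
  have hcompl : IsCompl (LinearMap.range δₗ) (Submodule.map S.subtype T') := by
    constructor
    · rw [Submodule.disjoint_def]
      intro x hxD hxT
      obtain ⟨s, hsT', rfl⟩ := hxT
      have hsW : s ∈ Submodule.comap S.subtype (LinearMap.range δₗ) := hxD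
      have : s ∈ Submodule.comap S.subtype (LinearMap.range δₗ) ⊓ T' := ⟨hsW, hsT'⟩
      rw [hT'.inf_eq_bot] at this
      rw [this]; rfl
    · rw [codisjoint_iff, eq_top_iff]
      intro f _
      have hf : f ∈ LinearMap.range δₗ ⊔ S := hsum ▸ Submodule.mem_top
      obtain ⟨d, hd, s, hs, rfl⟩ := Submodule.mem_sup.mp hf
      have : (⟨s, hs⟩ : ↥S) ∈ Submodule.comap S.subtype (LinearMap.range δₗ) ⊔ T' := by
        rw [hT'.sup_eq_top]; trivial
      obtain ⟨w, hw, t, ht, hwt⟩ := Submodule.mem_sup.mp this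
      have hs' : s = (w : H) + (t : H) := by
        have := congrArg (S.subtype) hwt
        simpa using this.symm
      rw [hs']
      exact add_mem (Submodule.mem_sup_left hd)
        (add_mem (Submodule.mem_sup_left (Submodule.mem_comap.mp hw))
          (Submodule.mem_sup_right ⟨t, ht, rfl⟩))
  -- the retraction
  let π := Submodule.linearProjOfIsCompl _ _ hcompl
  let e : Y ≃ₗ[Γ] ↥(LinearMap.range δₗ) := LinearEquiv.ofInjective δₗ hδinj
  let ρₗ : H →ₗ[Γ] Y := e.symm.toLinearMap ∘ₗ π
  refine ⟨ρₗ.toAddMonoidHom, fun γ f => ?_, fun y => ?_⟩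
  · show ρₗ (γ • f) = γ • ρₗ f
    exact map_smul ρₗ γ f
  · show e.symm (π (δₗ y)) = y
    have h1 : π (δₗ y) = e y := by
      have h2 : (⟨δₗ y, LinearMap.mem_range_self _ _⟩ : ↥(LinearMap.range δₗ)) = e y :=
        Subtype.ext (by simp [e])
      rw [← h2]
      exact Submodule.linearProjOfIsCompl_apply_left hcompl
        ⟨δₗ y, LinearMap.mem_range_self _ _⟩
    rw [h1, LinearEquiv.symm_apply_apply]
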